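/- (Closed form of the gradient flow.) Let J ∈ ℝ^{N×p}, y ∈ ℝ^N, γ > 0, α > 0. Suppose (θ_t, u_t, v_t) for t ≥ 0 are differentiable curves satisfying θ'_t = −Jᵀ r_t, u'_t = −2α u_t ⊙ r_t, v'_t = 2α v_t ⊙ r_t, where r_t = Jθ_t + u_t⊙u_t − v_t⊙v_t − y, with initialization θ₀ = 0, u₀ = γ·1, v₀ = γ·1. Define ν_t = −∫₀ᵗ r_τ dτ ∈ ℝ^N. Then for all t ≥ 0: θ_t = Jᵀ ν_t, u_t = γ·exp(2α ν_t) (entrywise exponential), and v_t = γ·exp(−2α ν_t). -/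

import Mathlib

open Filter Topology Set intervalIntegral MeasureTheory

/-- Closed form of the gradient flow: if `(θ_t, u_t, v_t)`
follow the gradient flow `θ' = −Jᵀr`, `u' = −2α u⊙r`, `v' = 2α v⊙r` with
`r = Jθ + u⊙u − v⊙v − y`, initialized at `θ₀ = 0`, `u₀ = v₀ = γ·1`, and
`ν_t = −∫₀ᵗ r_τ dτ` (entrywise), then for all `t ≥ 0`:
`θ_t = Jᵀν_t`, `u_t = γ·exp(2αν_t)`, `v_t = γ·exp(−2αν_t)` entrywise. -/
theorem stmt_12 (N p : ℕ) (J : Matrix (Fin N) (Fin p) ℝ) (y : Fin N → ℝ)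
    (γ α : ℝ) (hγ : 0 < γ) (hα : 0 < α)
    (θ : ℝ → Fin p → ℝ) (u v : ℝ → Fin N → ℝ) (r : ℝ → Fin N → ℝ)
    (hrdef : ∀ t : ℝ, r t = fun i =>
      J.mulVec (θ t) i + u t i * u t i - v t i * v t i - y i)
    (hθ' : ∀ t : ℝ, 0 ≤ t → HasDerivAt θ (-(J.transpose.mulVec (r t))) t)
    (hu' : ∀ t : ℝ, 0 ≤ t →
      HasDerivAt u (fun i => -(2 * α) * (u t i * r t i)) t)
    (hv' : ∀ t : ℝ, 0 ≤ t →
      HasDerivAt v (fun i => (2 * α) * (v t i * r t i)) t)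
    (hθ0 : θ 0 = 0) (hu0 : u 0 = fun _ => γ) (hv0 : v 0 = fun _ => γ)
    (ν : ℝ → Fin N → ℝ)
    (hν : ∀ t : ℝ, ν t = fun i => -∫ τ in (0 : ℝ)..t, r τ i) :
    ∀ t : ℝ, 0 ≤ t →
      θ t = J.transpose.mulVec (ν t) ∧
      u t = (fun i => γ * Real.exp (2 * α * ν t i)) ∧
      v t = (fun i => γ * Real.exp (-(2 * α * ν t i))) := by
  -- continuity of `r` at nonnegative points
  have hrc : ∀ x : ℝ, 0 ≤ x → ContinuousAt r x := by
    intro x hx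
    have hreq : r = fun τ => fun i =>
        J.mulVec (θ τ) i + u τ i * u τ i - v τ i * v τ i - y i := funext hrdef
    rw [hreq]
    have hθc : ContinuousAt θ x := (hθ' x hx).continuousAt
    have huc : ContinuousAt u x := (hu' x hx).continuousAt
    have hvc : ContinuousAt v x := (hv' x hx).continuousAt
    have hmul : Continuous (fun w : Fin p → ℝ => J.mulVec w) := by
      have := (Matrix.mulVecLin J).continuous_of_finiteDimensional
      exact this
    apply continuousAt_pi.2
    intro i
    have h1 : ContinuousAt (fun τ => J.mulVec (θ τ) i) x :=
      ((continuous_apply i).continuousAt).comp (hmul.continuousAt.comp hθc)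
    have h2 : ContinuousAt (fun τ => u τ i) x :=
      ((continuous_apply i).continuousAt).comp huc
    have h3 : ContinuousAt (fun τ => v τ i) x :=
      ((continuous_apply i).continuousAt).comp hvc
    exact (((h1.add (h2.mul h2)).sub (h3.mul h3)).sub continuousAt_const)
  have hrci : ∀ (i : Fin N) (x : ℝ), 0 ≤ x → ContinuousAt (fun τ => r τ i) x :=
    fun i x hx => ((continuous_apply i).continuousAt).comp (hrc x hx)
  have hrcOn : ∀ i : Fin N, ContinuousOn (fun τ => r τ i) (Ici 0) :=
    fun i x hx => (hrci i x hx).continuousWithinAt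
  have hν0 : ν 0 = 0 := by
    funext i; rw [hν]; simp
  intro t ht
  -- right derivative of `ν` components
  have hνd : ∀ (i : Fin N), ∀ x ∈ Ico (0:ℝ) t,
      HasDerivWithinAt (fun s => ν s i) (-(r x i)) (Ici x) x := by
    intro i x hx
    have hint : IntervalIntegrable (fun τ => r τ i) volume 0 x :=
      ((hrcOn i).mono (by rw [uIcc_of_le hx.1]; exact Icc_subset_Ici_self)).intervalIntegrable
    have hmeas : StronglyMeasurableAtFilter (fun τ => r τ i) (𝓝[Ioi x] x) volume := by
      refine ⟨Icc x (x + 1), nhdsWithin_mono x Ioi_subset_Ici_self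
        (Icc_mem_nhdsGE_of_mem ⟨le_refl x, by linarith⟩), ?_⟩
      exact ((hrcOn i).mono (fun z hz => le_trans hx.1 hz.1)).aestronglyMeasurable
        measurableSet_Icc
    have hcw : ContinuousWithinAt (fun τ => r τ i) (Ioi x) x :=
      (hrci i x hx.1).continuousWithinAt
    have H := (intervalIntegral.integral_hasDerivWithinAt_right (s := Ici x) (t := Ioi x) hint hmeas hcw).neg
    have hfun : (fun s => ν s i) = fun s => -∫ τ in (0:ℝ)..s, r τ i := by
      funext s; rw [hν]
    rw [hfun]
    exact H
  -- continuity of `ν` components on `[0, t]`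
  have hνcont : ∀ i : Fin N, ContinuousOn (fun s => ν s i) (Icc 0 t) := by
    intro i
    have hint : IntegrableOn (fun τ => r τ i) (uIcc 0 t) volume := by
      rw [uIcc_of_le ht]
      exact ((hrcOn i).mono Icc_subset_Ici_self).integrableOn_Icc
    have := (intervalIntegral.continuousOn_primitive_interval hint).neg
    rw [uIcc_of_le ht] at this
    have hfun : (fun s => ν s i) = fun s => -∫ τ in (0:ℝ)..s, r τ i := by
      funext s; rw [hν]
    rw [hfun]
    exact this
  constructor
  · -- θ part
    have key : ∀ z ∈ Icc (0:ℝ) t, θ z = J.transpose.mulVec (ν z) := by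
      refine eq_of_has_deriv_right_eq
        (f' := fun x => -(J.transpose.mulVec (r x)))
        (fun x hx => (hθ' x hx.1).hasDerivWithinAt) ?_ ?_ ?_ ?_
      · intro x hx
        apply hasDerivWithinAt_pi.2
        intro j
        have hsum : ∀ s, J.transpose.mulVec (ν s) j = ∑ i, J.transpose j i * ν s i := by
          intro s; simp [Matrix.mulVec, dotProduct]
        have H : HasDerivWithinAt (fun s => ∑ i, J.transpose j i * ν s i)
            (∑ i, J.transpose j i * -(r x i)) (Ici x) x :=
          HasDerivWithinAt.fun_sum (fun i _ => (hνd i x hx).const_mul (J.transpose j i))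
        have heq : (-(J.transpose.mulVec (r x))) j = ∑ i, J.transpose j i * -(r x i) := by
          simp [Matrix.mulVec, dotProduct, mul_neg]
        have hgfun : (fun s => J.transpose.mulVec (ν s) j)
            = fun s => ∑ i, J.transpose j i * ν s i := funext hsum
        rw [hgfun]
        rw [heq]; exact H
      · exact fun x hx => ((hθ' x hx.1).continuousAt).continuousWithinAt
      · have hmul : Continuous (fun w : Fin N → ℝ => J.transpose.mulVec w) := by
          have := (Matrix.mulVecLin J.transpose).continuous_of_finiteDimensional
          exact this
        have hνc : ContinuousOn ν (Icc 0 t) := by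
          apply continuousOn_pi.2
          exact hνcont
        exact hmul.comp_continuousOn hνc
      · rw [hθ0, hν0, Matrix.mulVec_zero]
    exact key t ⟨ht, le_refl t⟩
  constructor
  · -- u part
    funext i
    have key : ∀ z ∈ Icc (0:ℝ) t,
        u z i * Real.exp (-(2 * α * ν z i)) = γ := by
      refine eq_of_has_deriv_right_eq (f' := fun _ => (0:ℝ))
        (g := fun _ => γ) ?_ (fun x _ => (hasDerivWithinAt_const x _ γ)) ?_
        continuousOn_const ?_
      · intro x hx
        have hui : HasDerivWithinAt (fun s => u s i)
            (-(2 * α) * (u x i * r x i)) (Ici x) x :=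
          (hasDerivAt_pi.1 (hu' x hx.1) i).hasDerivWithinAt
        have hinner : HasDerivWithinAt (fun s => -(2 * α * ν s i))
            (-(2 * α * -(r x i))) (Ici x) x :=
          ((hνd i x hx).const_mul (2 * α)).neg
        have hexp := hinner.exp
        have := hui.fun_mul hexp
        refine this.congr_deriv ?_
        ring
      · intro x hx
        have h2 : ContinuousWithinAt (fun s => u s i) (Icc 0 t) x :=
          (((continuous_apply i).continuousAt).comp
            (hu' x hx.1).continuousAt).continuousWithinAt
        have h3 : ContinuousWithinAt (fun s => Real.exp (-(2 * α * ν s i))) (Icc 0 t) x :=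
          (Real.continuous_exp.comp_continuousOn
            ((continuousOn_const.mul (hνcont i)).neg)) x hx
        exact h2.mul h3
      · rw [hu0, hν0]; simp
    have h := key t ⟨ht, le_refl t⟩
    have : u t i = u t i * Real.exp (-(2 * α * ν t i)) * Real.exp (2 * α * ν t i) := by
      rw [mul_assoc, ← Real.exp_add]; simp
    rw [this, h]
  · -- v part
    funext i
    have key : ∀ z ∈ Icc (0:ℝ) t,
        v z i * Real.exp (2 * α * ν z i) = γ := by
      refine eq_of_has_deriv_right_eq (f' := fun _ => (0:ℝ))
        (g := fun _ => γ) ?_ (fun x _ => (hasDerivWithinAt_const x _ γ)) ?_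
        continuousOn_const ?_
      · intro x hx
        have hvi : HasDerivWithinAt (fun s => v s i)
            ((2 * α) * (v x i * r x i)) (Ici x) x :=
          (hasDerivAt_pi.1 (hv' x hx.1) i).hasDerivWithinAt
        have hinner : HasDerivWithinAt (fun s => 2 * α * ν s i)
            (2 * α * -(r x i)) (Ici x) x :=
          (hνd i x hx).const_mul (2 * α)
        have hexp := hinner.exp
        have := hvi.fun_mul hexp
        refine this.congr_deriv ?_
        ring
      · intro x hx
        have h2 : ContinuousWithinAt (fun s => v s i) (Icc 0 t) x :=
          (((continuous_apply i).continuousAt).comp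
            (hv' x hx.1).continuousAt).continuousWithinAt
        have h3 : ContinuousWithinAt (fun s => Real.exp (2 * α * ν s i)) (Icc 0 t) x :=
          (Real.continuous_exp.comp_continuousOn
            (continuousOn_const.mul (hνcont i))) x hx
        exact h2.mul h3
      · rw [hv0, hν0]; simp
    have h := key t ⟨ht, le_refl t⟩
    have : v t i = v t i * Real.exp (2 * α * ν t i) * Real.exp (-(2 * α * ν t i)) := by
      rw [mul_assoc, ← Real.exp_add]; simp
    rw [this, h]
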